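/- arXiv:1510.07377 — 2 statements merged into one kernel-verified Lean document; each statement's English description precedes it below -/
import Mathlib

section
/- Let 0 < α < 1, σ > 0, γ > (1+α)/σ, and consider the graded mesh tₙ = (n/N)^γ with steps kₙ = tₙ - tₙ₋₁ and k = max kₙ ≤ C/N. Suppose a function u satisfies ‖u''(t)‖ ≤ M t^(σ-2) for t ∈ (0,1]. Then maxₙ₌₂^N kₙ ∫_{Iₙ} ‖u''(t)‖ dt ≤ C k^(1+α) where Iₙ = (tₙ₋₁, tₙ] and C depends on M, α, σ, γ but not on N. -/
open Real MeasureTheory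

set_option maxHeartbeats 1000000

/-- Let `0 < α < 1`, `σ > 0`, `γ > (1+α)/σ`, graded mesh `tₙ = (n/N)^γ` (with `T = 1`),
steps `kₙ = tₙ - tₙ₋₁`, `k = max kₙ`. If `g = ‖u''‖` satisfies `0 ≤ g(t) ≤ M t^(σ-2)`
on `(0,1]`, then `maxₙ₌₂^N kₙ ∫_{Iₙ} g ≤ C k^(1+α)` with `C` independent of `N`. -/
theorem stmt15 (α σ γ M : ℝ) (hα : 0 < α) (hα1 : α < 1) (hσ : 0 < σ)
    (hγ : (1 + α) / σ < γ) (hγ1 : 1 ≤ γ) (hM : 0 < M)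
    (g : ℝ → ℝ) (hg0 : ∀ s ∈ Set.Ioc (0:ℝ) 1, 0 ≤ g s)
    (hg : ∀ s ∈ Set.Ioc (0:ℝ) 1, g s ≤ M * s ^ (σ - 2))
    (hgi : ∀ a b : ℝ, 0 < a → a ≤ b → b ≤ 1 →
      IntervalIntegrable g MeasureTheory.volume a b) :
    ∃ C > 0, ∀ N : ℕ, 2 ≤ N → ∀ t : ℕ → ℝ, (∀ n, t n = ((n : ℝ) / N) ^ γ) →
      ∀ k : ℝ, (∀ m, 1 ≤ m → m ≤ N → t m - t (m - 1) ≤ k) →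
        (∃ m, 1 ≤ m ∧ m ≤ N ∧ k = t m - t (m - 1)) →
        ∀ n, 2 ≤ n → n ≤ N →
          (t n - t (n - 1)) * (∫ s in (t (n - 1))..(t n), g s) ≤ C * k ^ (1 + α) := by
  have hγ0 : (0:ℝ) < γ := lt_of_lt_of_le one_pos hγ1
  have hE : 0 < γ * σ - (1 + α) := by
    have h := (div_lt_iff₀ hσ).mp hγ
    nlinarith
  refine ⟨M * γ ^ (1 + α) * (2:ℝ) ^ (2 * γ), by positivity, ?_⟩
  rintro N hN t ht k hk ⟨m, hm1, hmN, hkm⟩ n hn2 hnN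
  have hNpos : 0 < N := by omega
  have hN0 : (0:ℝ) < (N:ℝ) := by exact_mod_cast hNpos
  have hn2' : (2:ℝ) ≤ (n:ℝ) := by exact_mod_cast hn2
  have hnN' : (n:ℝ) ≤ (N:ℝ) := by exact_mod_cast hnN
  set x : ℝ := (n:ℝ) / N with hxdef
  set y : ℝ := ((n:ℝ) - 1) / N with hydef
  have hx0 : 0 < x := by apply div_pos <;> linarith
  have hy0 : 0 < y := by apply div_pos <;> linarith
  have hx1 : x ≤ 1 := by rw [hxdef, div_le_one hN0]; linarith
  have hyx : y < x := by
    rw [hxdef, hydef]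
    gcongr
    · linarith
  have hxy2 : x ≤ 2 * y := by
    have h : (n:ℝ) / N ≤ (2 * ((n:ℝ) - 1)) / N := by gcongr <;> linarith
    calc x = (n:ℝ) / N := hxdef
      _ ≤ (2 * ((n:ℝ) - 1)) / N := h
      _ = 2 * y := by rw [hydef]; ring
  have hxy : x - y = 1 / N := by rw [hxdef, hydef]; field_simp; ring
  -- values of the mesh
  have htn : t n = x ^ γ := by rw [ht n]
  have htn1 : t (n - 1) = y ^ γ := by
    rw [ht (n - 1)]
    congr 2
    push_cast [Nat.cast_sub (show 1 ≤ n by omega)]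
    ring
  -- k is at least 1/N
  have hkN : 1 / (N:ℝ) ≤ k := by
    have h := hk N (by omega) (le_refl N)
    have hTN : t N = 1 := by
      rw [ht N, div_self hN0.ne', Real.one_rpow]
    have hcast : (((N - 1 : ℕ)):ℝ) = (N:ℝ) - 1 := by
      push_cast [Nat.cast_sub (show 1 ≤ N by omega)]; ring
    have hTN1 : t (N - 1) ≤ ((N:ℝ) - 1) / N := by
      rw [ht (N - 1), hcast]
      have hz0 : 0 < ((N:ℝ) - 1) / N := by apply div_pos <;> linarith
      have hz1 : ((N:ℝ) - 1) / N ≤ 1 := by rw [div_le_one hN0]; linarith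
      calc (((N:ℝ) - 1) / N) ^ γ ≤ (((N:ℝ) - 1) / N) ^ (1:ℝ) :=
            Real.rpow_le_rpow_of_exponent_ge hz0 hz1 hγ1
        _ = ((N:ℝ) - 1) / N := Real.rpow_one _
    have hkey : 1 - ((N:ℝ) - 1) / N ≤ k := by rw [hTN] at h; linarith
    have heq : 1 - ((N:ℝ) - 1) / N = 1 / N := by field_simp; ring
    linarith
  have hk0 : 0 < k := lt_of_lt_of_le (by positivity) hkN
  -- MVT: x^γ - y^γ ≤ γ x^(γ-1) (x - y)
  have hmvt : x ^ γ - y ^ γ ≤ γ * x ^ (γ - 1) * (x - y) := by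
    obtain ⟨c, hc, hderiv⟩ := exists_hasDerivAt_eq_slope (fun s : ℝ => s ^ γ)
      (fun s : ℝ => γ * s ^ (γ - 1)) hyx
      (fun s _ => (Real.hasDerivAt_rpow_const (p := γ) (Or.inr hγ1)).continuousAt.continuousWithinAt)
      (fun s _ => Real.hasDerivAt_rpow_const (p := γ) (Or.inr hγ1))
    have hderiv' : γ * c ^ (γ - 1) = (x ^ γ - y ^ γ) / (x - y) := hderiv
    have hxyne : x - y ≠ 0 := sub_ne_zero.mpr (ne_of_gt hyx)
    have hslope : x ^ γ - y ^ γ = γ * c ^ (γ - 1) * (x - y) := by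
      rw [hderiv']; field_simp
    have hc0 : 0 ≤ c := le_of_lt (hy0.trans hc.1)
    have hcx : c ≤ x := hc.2.le
    have hcd : c ^ (γ - 1) ≤ x ^ (γ - 1) := Real.rpow_le_rpow hc0 hcx (by linarith)
    rw [hslope]
    have hxynn : 0 ≤ x - y := by linarith
    have := mul_le_mul_of_nonneg_right
      (mul_le_mul_of_nonneg_left hcd hγ0.le) hxynn
    linarith
  set K : ℝ := x ^ γ - y ^ γ with hKdef
  have hK0 : 0 < K := by
    have := Real.rpow_lt_rpow hy0.le hyx hγ0
    rw [hKdef]; linarith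
  have hK2 : K ≤ γ * k * x ^ (γ - 1) := by
    have hxg : 0 ≤ x ^ (γ - 1) := Real.rpow_nonneg hx0.le _
    calc K ≤ γ * x ^ (γ - 1) * (x - y) := hmvt
      _ = γ * x ^ (γ - 1) * (1 / N) := by rw [hxy]
      _ ≤ γ * x ^ (γ - 1) * k := by
          exact mul_le_mul_of_nonneg_left hkN (mul_nonneg hγ0.le hxg)
      _ = γ * k * x ^ (γ - 1) := by ring
  have hKb : K ≤ x ^ γ := by
    have := Real.rpow_nonneg hy0.le γ
    rw [hKdef]; linarith
  -- the interval endpoints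
  set a : ℝ := y ^ γ with hadef
  set b : ℝ := x ^ γ with hbdef
  have ha0 : 0 < a := Real.rpow_pos_of_pos hy0 _
  have hb1 : b ≤ 1 := Real.rpow_le_one hx0.le hx1 hγ0.le
  have hab : a < b := Real.rpow_lt_rpow hy0.le hyx hγ0
  -- integral bound
  have hIb : (∫ s in a..b, g s) ≤ (b - a) * (M * b ^ σ * a ^ (-2:ℝ)) := by
    have hint := hgi a b ha0 hab.le hb1
    have hconst : IntervalIntegrable (fun _ : ℝ => M * b ^ σ * a ^ (-2:ℝ)) volume a b :=
      intervalIntegrable_const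
    have hptwise : ∀ s ∈ Set.Icc a b, g s ≤ M * b ^ σ * a ^ (-2:ℝ) := by
      intro s hs
      have hs0 : 0 < s := ha0.trans_le hs.1
      have hs1 : s ≤ 1 := hs.2.trans hb1
      have h1 : g s ≤ M * s ^ (σ - 2) := hg s ⟨hs0, hs1⟩
      have h2 : s ^ (σ - 2) = s ^ σ * s ^ (-2:ℝ) := by
        rw [show σ - 2 = σ + (-2) by ring, Real.rpow_add hs0]
      have h3 : s ^ σ ≤ b ^ σ := Real.rpow_le_rpow hs0.le hs.2 hσ.le
      have h4 : s ^ (-2:ℝ) ≤ a ^ (-2:ℝ) :=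
        Real.rpow_le_rpow_of_nonpos ha0 hs.1 (by norm_num)
      calc g s ≤ M * s ^ (σ - 2) := h1
        _ = M * (s ^ σ * s ^ (-2:ℝ)) := by rw [h2]
        _ ≤ M * (b ^ σ * a ^ (-2:ℝ)) := by
            refine mul_le_mul_of_nonneg_left ?_ hM.le
            exact mul_le_mul h3 h4 (Real.rpow_nonneg hs0.le _)
              (Real.rpow_nonneg (le_of_lt (ha0.trans hab)) _)
        _ = M * b ^ σ * a ^ (-2:ℝ) := by ring
    have hmono := intervalIntegral.integral_mono_on hab.le hint hconst hptwise
    rwa [intervalIntegral.integral_const, smul_eq_mul] at hmono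
  -- rewrite the goal
  rw [htn, htn1]
  have hba : b - a = K := rfl
  rw [hba]
  -- main chain
  have hBnn : 0 ≤ M * b ^ σ * a ^ (-2:ℝ) := by positivity
  have step1 : K * (∫ s in a..b, g s) ≤ K * K * (M * b ^ σ * a ^ (-2:ℝ)) := by
    have h := mul_le_mul_of_nonneg_left hIb hK0.le
    calc K * (∫ s in a..b, g s) ≤ K * ((b - a) * (M * b ^ σ * a ^ (-2:ℝ))) := h
      _ = K * K * (M * b ^ σ * a ^ (-2:ℝ)) := by rw [hba]; ring
  have hsplit : K * K ≤ b ^ ((1:ℝ) - α) * (γ * k * x ^ (γ - 1)) ^ ((1:ℝ) + α) := by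
    have h1 : K ^ ((1:ℝ) - α) ≤ b ^ ((1:ℝ) - α) :=
      Real.rpow_le_rpow hK0.le hKb (by linarith)
    have h2 : K ^ ((1:ℝ) + α) ≤ (γ * k * x ^ (γ - 1)) ^ ((1:ℝ) + α) :=
      Real.rpow_le_rpow hK0.le hK2 (by linarith)
    have hKK : K * K = K ^ ((1:ℝ) - α) * K ^ ((1:ℝ) + α) := by
      rw [← Real.rpow_add hK0, show (1:ℝ) - α + (1 + α) = ((2:ℕ):ℝ) by push_cast; ring,
        Real.rpow_natCast, pow_two]
    rw [hKK]
    exact mul_le_mul h1 h2 (Real.rpow_nonneg hK0.le _)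
      (Real.rpow_nonneg (le_of_lt (ha0.trans hab)) _)
  have halg : b ^ ((1:ℝ) - α) * (γ * k * x ^ (γ - 1)) ^ ((1:ℝ) + α) *
      (M * b ^ σ * a ^ (-2:ℝ)) ≤ M * γ ^ (1 + α) * (2:ℝ) ^ (2 * γ) * k ^ (1 + α) := by
    have hxg1 : (0:ℝ) ≤ x ^ (γ - 1) := Real.rpow_nonneg hx0.le _
    have e1 : (γ * k * x ^ (γ - 1)) ^ ((1:ℝ) + α)
        = γ ^ ((1:ℝ) + α) * k ^ ((1:ℝ) + α) * x ^ ((γ - 1) * (1 + α)) := by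
      rw [Real.mul_rpow (by positivity) hxg1, Real.mul_rpow hγ0.le hk0.le,
        ← Real.rpow_mul hx0.le]
    have e2 : b ^ ((1:ℝ) - α) = x ^ (γ * (1 - α)) := by
      rw [hbdef, ← Real.rpow_mul hx0.le]
    have e3 : b ^ σ = x ^ (γ * σ) := by rw [hbdef, ← Real.rpow_mul hx0.le]
    have e4 : a ^ (-2:ℝ) = y ^ (γ * (-2)) := by rw [hadef, ← Real.rpow_mul hy0.le]
    have hhalf : (0:ℝ) < x / 2 := by positivity
    have e5 : y ^ (γ * (-2)) ≤ (x / 2) ^ (γ * (-2)) :=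
      Real.rpow_le_rpow_of_nonpos hhalf (by linarith) (by nlinarith)
    have e6 : (x / 2) ^ (γ * (-2)) = x ^ (γ * (-2)) * (2:ℝ) ^ (2 * γ) := by
      rw [Real.div_rpow hx0.le (by norm_num)]
      rw [show γ * (-2) = -(2 * γ) by ring,
        Real.rpow_neg (by norm_num : (0:ℝ) ≤ 2) (2 * γ), div_eq_mul_inv, inv_inv]
    calc b ^ ((1:ℝ) - α) * (γ * k * x ^ (γ - 1)) ^ ((1:ℝ) + α) * (M * b ^ σ * a ^ (-2:ℝ))
        = (M * γ ^ ((1:ℝ) + α) * k ^ ((1:ℝ) + α)) *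
            (x ^ (γ * (1 - α)) * x ^ ((γ - 1) * (1 + α)) * x ^ (γ * σ)) * y ^ (γ * (-2)) := by
          rw [e1, e2, e3, e4]; ring
      _ ≤ (M * γ ^ ((1:ℝ) + α) * k ^ ((1:ℝ) + α)) *
            (x ^ (γ * (1 - α)) * x ^ ((γ - 1) * (1 + α)) * x ^ (γ * σ)) *
            ((x / 2) ^ (γ * (-2))) := by
          refine mul_le_mul_of_nonneg_left e5 ?_
          positivity
      _ = (M * γ ^ ((1:ℝ) + α) * (2:ℝ) ^ (2 * γ) * k ^ ((1:ℝ) + α)) *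
            (x ^ (γ * (1 - α)) * x ^ ((γ - 1) * (1 + α)) * x ^ (γ * σ) * x ^ (γ * (-2))) := by
          rw [e6]; ring
      _ = (M * γ ^ ((1:ℝ) + α) * (2:ℝ) ^ (2 * γ) * k ^ ((1:ℝ) + α)) *
            x ^ (γ * σ - (1 + α)) := by
          rw [← Real.rpow_add hx0, ← Real.rpow_add hx0, ← Real.rpow_add hx0]
          congr 1
          ring
      _ ≤ (M * γ ^ ((1:ℝ) + α) * (2:ℝ) ^ (2 * γ) * k ^ ((1:ℝ) + α)) * 1 := by
          refine mul_le_mul_of_nonneg_left (Real.rpow_le_one hx0.le hx1 hE.le) ?_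
          positivity
      _ = M * γ ^ (1 + α) * (2:ℝ) ^ (2 * γ) * k ^ (1 + α) := by ring
  calc K * (∫ s in a..b, g s)
      ≤ K * K * (M * b ^ σ * a ^ (-2:ℝ)) := step1
    _ ≤ b ^ ((1:ℝ) - α) * (γ * k * x ^ (γ - 1)) ^ ((1:ℝ) + α) *
        (M * b ^ σ * a ^ (-2:ℝ)) := mul_le_mul_of_nonneg_right hsplit hBnn
    _ ≤ M * γ ^ (1 + α) * (2:ℝ) ^ (2 * γ) * k ^ (1 + α) := halg
end

section
/- Let 0 < α < 1, σ > 0, γ > (1+α)/σ, M > 0, T = 1, and graded mesh tₙ = (n/N)^γ. If ‖Au''(t)‖ ≤ M t^(σ-α-2) for t ∈ (0,1], then E₂ := Σₙ₌₂^N kₙ^(1+α) ∫_{Iₙ} ‖Au''(t)‖ dt ≤ C k^(1+α) where C is independent of N. -/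
open Real MeasureTheory

lemma mvt_rpow_aux {γ : ℝ} (hγ1 : 1 ≤ γ) {x y : ℝ} (hx : 0 ≤ x) (hxy : x ≤ y) :
    y ^ γ - x ^ γ ≤ γ * y ^ (γ - 1) * (y - x) := by
  rcases eq_or_lt_of_le hxy with rfl | hlt
  · simp
  have hcont : ContinuousOn (fun s : ℝ => s ^ γ) (Set.Icc x y) := fun s _ =>
    (Real.continuousAt_rpow_const s γ (Or.inr (by linarith))).continuousWithinAt
  have hderiv : ∀ s ∈ Set.Ioo x y, HasDerivAt (fun s : ℝ => s ^ γ) (γ * s ^ (γ - 1)) s :=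
    fun s _ => Real.hasDerivAt_rpow_const (Or.inr hγ1)
  obtain ⟨c, hc, hceq⟩ :=
    exists_hasDerivAt_eq_slope (fun s => s ^ γ) (fun s => γ * s ^ (γ - 1)) hlt hcont hderiv
  have hc0 : 0 ≤ c := le_trans hx hc.1.le
  have h1 : γ * c ^ (γ - 1) ≤ γ * y ^ (γ - 1) :=
    mul_le_mul_of_nonneg_left (Real.rpow_le_rpow hc0 hc.2.le (by linarith)) (by linarith)
  have hyx : (0:ℝ) < y - x := by linarith
  have h2 : (y ^ γ - x ^ γ) / (y - x) ≤ γ * y ^ (γ - 1) := hceq ▸ h1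
  calc y ^ γ - x ^ γ = (y ^ γ - x ^ γ) / (y - x) * (y - x) := by field_simp
    _ ≤ γ * y ^ (γ - 1) * (y - x) := mul_le_mul_of_nonneg_right h2 hyx.le

/-- Let `0 < α < 1`, `σ > 0`, `γ > (1+α)/σ`, `M > 0`, `T = 1`, graded mesh
`tₙ = (n/N)^γ`. If `g = ‖Au''‖` satisfies `0 ≤ g(t) ≤ M t^(σ-α-2)` on `(0,1]`, then
`E₂ = Σₙ₌₂^N kₙ^(1+α) ∫_{Iₙ} g ≤ C k^(1+α)` with `C` independent of `N`. -/
theorem stmt16 (α σ γ M : ℝ) (hα : 0 < α) (hα1 : α < 1) (hσ : 0 < σ)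
    (hγ : (1 + α) / σ < γ) (hγ1 : 1 ≤ γ) (hM : 0 < M)
    (g : ℝ → ℝ) (hg0 : ∀ s ∈ Set.Ioc (0:ℝ) 1, 0 ≤ g s)
    (hg : ∀ s ∈ Set.Ioc (0:ℝ) 1, g s ≤ M * s ^ (σ - α - 2))
    (hgi : ∀ a b : ℝ, 0 < a → a ≤ b → b ≤ 1 →
      IntervalIntegrable g MeasureTheory.volume a b) :
    ∃ C > 0, ∀ N : ℕ, 2 ≤ N → ∀ t : ℕ → ℝ, (∀ n, t n = ((n : ℝ) / N) ^ γ) →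
      ∀ k : ℝ, (∀ m, 1 ≤ m → m ≤ N → t m - t (m - 1) ≤ k) →
        (∃ m, 1 ≤ m ∧ m ≤ N ∧ k = t m - t (m - 1)) →
        (∑ n ∈ Finset.Icc 2 N,
            (t n - t (n - 1)) ^ (1 + α) * (∫ s in (t (n - 1))..(t n), g s)) ≤
          C * k ^ (1 + α) := by
  have hγ0 : 0 < γ := lt_of_lt_of_le one_pos hγ1
  have hγne : γ ≠ 0 := ne_of_gt hγ0
  have hδ0 : 0 ≤ 1 - 1/γ := by
    have : 1/γ ≤ 1 := by rw [div_le_one hγ0]; exact hγ1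
    linarith
  have hβ0 : 0 < σ - (1 + α)/γ := by
    rw [div_lt_iff₀ hσ] at hγ
    rw [sub_pos, div_lt_iff₀ hγ0]
    nlinarith
  set β := σ - (1 + α)/γ with hβdef
  set b := min β 1 with hbdef
  have hb0 : 0 < b := lt_min hβ0 one_pos
  have hb1 : b ≤ 1 := min_le_right _ _
  have hbβ : b ≤ β := min_le_left _ _
  have h2γ : (0:ℝ) < 2 ^ γ := rpow_pos_of_pos two_pos _
  have h2γ1 : (1:ℝ) ≤ 2 ^ γ := by
    calc (1:ℝ) = 1 ^ γ := (one_rpow γ).symm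
      _ ≤ 2 ^ γ := rpow_le_rpow (by norm_num) one_le_two hγ0.le
  set K := γ * 2 ^ (γ - 1) with hKdef
  have hK0 : 0 < K := mul_pos hγ0 (rpow_pos_of_pos two_pos _)
  refine ⟨M * K ^ (1 + α) * (2 ^ γ / b + 1), by positivity, ?_⟩
  intro N hN t ht k hk _
  have hNn : 0 < N := by omega
  have hN0 : (0:ℝ) < (N:ℝ) := by exact_mod_cast hNn
  have hN2 : (2:ℝ) ≤ (N:ℝ) := by exact_mod_cast hN
  have htN : t N = 1 := by rw [ht, div_self (ne_of_gt hN0), one_rpow]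
  -- k ≥ 1/N > 0
  have h1Nk : 1/(N:ℝ) ≤ k := by
    have h1 := hk N (by omega) le_rfl
    have hcast : ((N - 1 : ℕ):ℝ) = (N:ℝ) - 1 := by
      have h : 1 ≤ N := by omega
      push_cast [h]
      ring
    have h2 : t (N-1) ≤ ((N:ℝ) - 1)/N := by
      rw [ht, hcast]
      have hbase0 : 0 < ((N:ℝ) - 1)/N := by
        apply div_pos _ hN0; linarith
      have hbase1 : ((N:ℝ) - 1)/N ≤ 1 := by
        rw [div_le_one hN0]; linarith
      calc (((N:ℝ) - 1)/N) ^ γ ≤ (((N:ℝ) - 1)/N) ^ (1:ℝ) :=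
            rpow_le_rpow_of_exponent_ge hbase0 hbase1 hγ1
        _ = ((N:ℝ) - 1)/N := rpow_one _
    rw [htN] at h1
    have h3 : 1 - ((N:ℝ) - 1)/N = 1/N := by field_simp; ring
    linarith
  have hk0 : 0 < k := lt_of_lt_of_le (by positivity) h1Nk
  set D := M * K ^ (1 + α) * k ^ (1 + α) with hDdef
  have hD0 : 0 ≤ D := by positivity
  -- per-term bound
  have key : ∀ n, 2 ≤ n → n ≤ N →
      (t n - t (n - 1)) ^ (1 + α) * (∫ s in (t (n - 1))..(t n), g s)
        ≤ D * (2 ^ γ * (∫ s in (t (n - 1))..(t n), s ^ (b - 1)) + (t n - t (n - 1))) := by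
    intro n h2n hnN
    have hn2R : (2:ℝ) ≤ (n:ℝ) := by exact_mod_cast h2n
    have hnNR : (n:ℝ) ≤ (N:ℝ) := by exact_mod_cast hnN
    have hcast : ((n - 1 : ℕ):ℝ) = (n:ℝ) - 1 := by
      have h : 1 ≤ n := by omega
      push_cast [h]
      ring
    set p := t (n - 1) with hpdef
    set q := t n with hqdef
    have hp : p = (((n:ℝ) - 1)/N) ^ γ := by rw [hpdef, ht, hcast]
    have hq : q = ((n:ℝ)/N) ^ γ := by rw [hqdef, ht]
    have hp0 : 0 < p := by rw [hp]; apply rpow_pos_of_pos; apply div_pos _ hN0; linarith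
    have hpq : p ≤ q := by
      rw [hp, hq]
      apply rpow_le_rpow (div_nonneg (by linarith) hN0.le) _ hγ0.le
      gcongr
      linarith
    have hq1 : q ≤ 1 := by
      rw [hq]
      exact rpow_le_one (by positivity) ((div_le_one hN0).2 hnNR) hγ0.le
    have hp1 : p ≤ 1 := le_trans hpq hq1
    have hq0 : 0 < q := lt_of_lt_of_le hp0 hpq
    have hq2p : q ≤ 2 ^ γ * p := by
      rw [hp, hq, ← mul_rpow (by norm_num) (div_nonneg (by linarith) hN0.le)]
      apply rpow_le_rpow (by positivity) _ hγ0.le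
      have h2x : 2 * (((n:ℝ) - 1)/N) = (2*((n:ℝ) - 1))/N := by ring
      rw [h2x]
      gcongr
      linarith
    -- step-size bound: q - p ≤ K * p^(1-1/γ) * k
    have hqδ : q ^ (1 - 1/γ) = ((n:ℝ)/N) ^ (γ - 1) := by
      rw [hq, ← rpow_mul (by positivity)]
      congr 1
      field_simp
    have h2γδ : ((2:ℝ) ^ γ) ^ (1 - 1/γ) = 2 ^ (γ - 1) := by
      rw [← rpow_mul (by norm_num)]
      congr 1
      field_simp
    have hqδle : q ^ (1 - 1/γ) ≤ 2 ^ (γ - 1) * p ^ (1 - 1/γ) := by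
      calc q ^ (1 - 1/γ) ≤ (2 ^ γ * p) ^ (1 - 1/γ) := rpow_le_rpow hq0.le hq2p hδ0
        _ = ((2:ℝ) ^ γ) ^ (1 - 1/γ) * p ^ (1 - 1/γ) := mul_rpow h2γ.le hp0.le
        _ = 2 ^ (γ - 1) * p ^ (1 - 1/γ) := by rw [h2γδ]
    have hkn : q - p ≤ K * p ^ (1 - 1/γ) * k := by
      have hm := mvt_rpow_aux hγ1 (x := ((n:ℝ) - 1)/N) (y := (n:ℝ)/N)
        (div_nonneg (by linarith) hN0.le) (by gcongr; linarith)
      calc q - p = ((n:ℝ)/N) ^ γ - (((n:ℝ) - 1)/N) ^ γ := by rw [hp, hq]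
        _ ≤ γ * ((n:ℝ)/N) ^ (γ - 1) * ((n:ℝ)/N - ((n:ℝ) - 1)/N) := hm
        _ = γ * (q ^ (1 - 1/γ)) * (1/N) := by rw [hqδ]; ring
        _ ≤ γ * (2 ^ (γ - 1) * p ^ (1 - 1/γ)) * k := by
            apply mul_le_mul (mul_le_mul_of_nonneg_left hqδle hγ0.le) h1Nk
              (by positivity) (by positivity)
        _ = K * p ^ (1 - 1/γ) * k := by rw [hKdef]; ring
    -- integral of g bound
    have hInonneg : 0 ≤ ∫ s in p..q, g s :=
      intervalIntegral.integral_nonneg hpq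
        (fun s hs => hg0 s ⟨lt_of_lt_of_le hp0 hs.1, hs.2.trans hq1⟩)
    have hIbound : (∫ s in p..q, g s) ≤ M * ((q - p) * p ^ (σ - α - 2) + (q - p)) := by
      have hle : ∀ s ∈ Set.Icc p q, g s ≤ M * (p ^ (σ - α - 2) + 1) := by
        intro s hs
        have hs0 : 0 < s := lt_of_lt_of_le hp0 hs.1
        have hs1 : s ≤ 1 := le_trans hs.2 hq1
        have h1 := hg s ⟨hs0, hs1⟩
        have h2 : s ^ (σ - α - 2) ≤ p ^ (σ - α - 2) + 1 := by
          rcases le_or_gt 0 (σ - α - 2) with he | he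
          · have hA : s ^ (σ - α - 2) ≤ 1 := rpow_le_one hs0.le hs1 he
            have hB : 0 ≤ p ^ (σ - α - 2) := (rpow_pos_of_pos hp0 _).le
            linarith
          · have := rpow_le_rpow_of_nonpos hp0 hs.1 he.le
            linarith
        calc g s ≤ M * s ^ (σ - α - 2) := h1
          _ ≤ M * (p ^ (σ - α - 2) + 1) := mul_le_mul_of_nonneg_left h2 hM.le
      have h := intervalIntegral.integral_mono_on hpq (hgi p q hp0 hpq hq1)
        intervalIntegrable_const hle
      simpa [intervalIntegral.integral_const, smul_eq_mul] using h
    -- p-power factor bound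
    have e1 : (p ^ (1 - 1/γ)) ^ (1 + α) * p ^ (σ - α - 2) = p ^ (β - 1) := by
      rw [← rpow_mul hp0.le, ← rpow_add hp0]
      congr 1
      rw [hβdef]
      field_simp
      ring
    have e2 : p ^ (β - 1) ≤ 2 ^ γ * q ^ (b - 1) := by
      have h1 : p ^ (β - 1) ≤ p ^ (b - 1) :=
        rpow_le_rpow_of_exponent_ge hp0 hp1 (by linarith)
      have h2 : (2 ^ γ * p) ^ (b - 1) ≤ q ^ (b - 1) :=
        rpow_le_rpow_of_nonpos hq0 hq2p (by linarith)
      have h3 : ((2:ℝ) ^ γ * p) ^ (b - 1) = ((2:ℝ) ^ γ) ^ (b - 1) * p ^ (b - 1) :=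
        mul_rpow h2γ.le hp0.le
      have h4 : p ^ (b - 1) = ((2:ℝ) ^ γ) ^ (1 - b) * ((2:ℝ) ^ γ * p) ^ (b - 1) := by
        rw [h3, ← mul_assoc, ← rpow_add h2γ]
        norm_num
      have h5 : ((2:ℝ) ^ γ) ^ (1 - b) ≤ 2 ^ γ := by
        calc ((2:ℝ) ^ γ) ^ (1 - b) ≤ ((2:ℝ) ^ γ) ^ (1:ℝ) :=
              rpow_le_rpow_of_exponent_le h2γ1 (by linarith)
          _ = 2 ^ γ := rpow_one _
      calc p ^ (β - 1) ≤ p ^ (b - 1) := h1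
        _ = ((2:ℝ) ^ γ) ^ (1 - b) * ((2:ℝ) ^ γ * p) ^ (b - 1) := h4
        _ ≤ 2 ^ γ * q ^ (b - 1) :=
            mul_le_mul h5 h2 (rpow_nonneg (by positivity) _) h2γ.le
    have e3 : (p ^ (1 - 1/γ)) ^ (1 + α) ≤ 1 := by
      rw [← rpow_mul hp0.le]
      exact rpow_le_one hp0.le hp1 (mul_nonneg hδ0 (by linarith))
    have hq_rint : (q - p) * q ^ (b - 1) ≤ ∫ s in p..q, s ^ (b - 1) := by
      have h := intervalIntegral.integral_mono_on (f := fun _ => q ^ (b - 1))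
        (g := fun s => s ^ (b - 1)) hpq intervalIntegrable_const
        (intervalIntegral.intervalIntegrable_rpow' (by linarith))
        (fun s hs => rpow_le_rpow_of_nonpos (lt_of_lt_of_le hp0 hs.1) hs.2 (by linarith))
      simpa [intervalIntegral.integral_const, smul_eq_mul] using h
    have hrint0 : 0 ≤ ∫ s in p..q, s ^ (b - 1) :=
      le_trans (mul_nonneg (by linarith) (rpow_nonneg hq0.le _)) hq_rint
    -- combine
    have hknn : 0 ≤ q - p := by linarith
    calc (q - p) ^ (1 + α) * (∫ s in p..q, g s)
        ≤ (K * p ^ (1 - 1/γ) * k) ^ (1 + α) * (M * ((q - p) * p ^ (σ - α - 2) + (q - p))) := by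
          apply mul_le_mul (rpow_le_rpow hknn hkn (by linarith)) hIbound hInonneg
            (rpow_nonneg (by positivity) _)
      _ = D * ((q - p) * ((p ^ (1 - 1/γ)) ^ (1 + α) * p ^ (σ - α - 2))
            + (q - p) * (p ^ (1 - 1/γ)) ^ (1 + α)) := by
          rw [hDdef, mul_rpow (mul_nonneg hK0.le (rpow_nonneg hp0.le _)) hk0.le,
            mul_rpow hK0.le (rpow_nonneg hp0.le _)]
          ring
      _ = D * ((q - p) * p ^ (β - 1) + (q - p) * (p ^ (1 - 1/γ)) ^ (1 + α)) := by rw [e1]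
      _ ≤ D * ((q - p) * (2 ^ γ * q ^ (b - 1)) + (q - p) * 1) := by
          apply mul_le_mul_of_nonneg_left _ hD0
          apply add_le_add (mul_le_mul_of_nonneg_left e2 hknn)
            (mul_le_mul_of_nonneg_left e3 hknn)
      _ = D * (2 ^ γ * ((q - p) * q ^ (b - 1)) + (q - p)) := by ring
      _ ≤ D * (2 ^ γ * (∫ s in p..q, s ^ (b - 1)) + (q - p)) := by
          apply mul_le_mul_of_nonneg_left _ hD0
          apply add_le_add_left (mul_le_mul_of_nonneg_left hq_rint h2γ.le)
  -- sum it up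
  have hstep := Finset.sum_le_sum
    (fun n hn => key n (Finset.mem_Icc.1 hn).1 (Finset.mem_Icc.1 hn).2)
  refine le_trans hstep ?_
  have hreidx : ∑ n ∈ Finset.Icc 2 N,
        D * (2 ^ γ * (∫ s in (t (n - 1))..(t n), s ^ (b - 1)) + (t n - t (n - 1)))
      = ∑ i ∈ Finset.range (N - 1),
        D * (2 ^ γ * (∫ s in (t (i + 1))..(t (i + 2)), s ^ (b - 1)) + (t (i + 2) - t (i + 1))) := by
    rw [← Finset.Ico_add_one_right_eq_Icc, Finset.sum_Ico_eq_sum_range]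
    have h : N + 1 - 2 = N - 1 := by omega
    rw [h]
    refine Finset.sum_congr rfl (fun i _ => ?_)
    have h1 : 2 + i = i + 2 := by omega
    have h2 : 2 + i - 1 = i + 1 := by omega
    rw [h2, h1]
  rw [hreidx]
  have hsum_int : ∑ i ∈ Finset.range (N - 1), (∫ s in (t (i + 1))..(t (i + 2)), s ^ (b - 1))
      = ∫ s in (t 1)..(t N), s ^ (b - 1) := by
    have h := intervalIntegral.sum_integral_adjacent_intervals (μ := volume)
      (f := fun s => s ^ (b - 1)) (a := fun i => t (i + 1)) (n := N - 1)
      (fun i _ => intervalIntegral.intervalIntegrable_rpow' (by linarith))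
    have hNN : N - 1 + 1 = N := by omega
    rw [hNN] at h
    exact h
  have hsum_k : ∑ i ∈ Finset.range (N - 1), (t (i + 2) - t (i + 1)) = t N - t 1 := by
    have h := Finset.sum_range_sub (f := fun i => t (i + 1)) (n := N - 1)
    have hNN : N - 1 + 1 = N := by omega
    rw [hNN] at h
    exact h
  calc ∑ i ∈ Finset.range (N - 1),
        D * (2 ^ γ * (∫ s in (t (i + 1))..(t (i + 2)), s ^ (b - 1)) + (t (i + 2) - t (i + 1)))
      = D * (2 ^ γ * (∫ s in (t 1)..(t N), s ^ (b - 1)) + (t N - t 1)) := by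
        rw [← Finset.mul_sum, Finset.sum_add_distrib, ← Finset.mul_sum, hsum_int, hsum_k]
    _ ≤ D * (2 ^ γ * (1/b) + 1) := by
        have ht10 : 0 ≤ t 1 := by rw [ht]; positivity
        have ht11 : t 1 ≤ 1 := by
          rw [ht]
          exact rpow_le_one (by positivity) ((div_le_one hN0).2 (by exact_mod_cast by omega)) hγ0.le
        have hint_le : (∫ s in (t 1)..(t N), s ^ (b - 1)) ≤ 1/b := by
          rw [htN, integral_rpow (Or.inl (by linarith))]
          have hb : b - 1 + 1 = b := by ring
          rw [hb, one_rpow]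
          have h0 : 0 ≤ (t 1) ^ b := rpow_nonneg ht10 _
          gcongr
          linarith
        apply mul_le_mul_of_nonneg_left _ hD0
        apply add_le_add (mul_le_mul_of_nonneg_left hint_le h2γ.le)
        rw [htN]; linarith
    _ = (M * K ^ (1 + α) * (2 ^ γ / b + 1)) * k ^ (1 + α) := by rw [hDdef]; ring
end
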